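/- Let c > 0 and m ∈ ℕ. There exists a constant C = C(c, m) such that for every n ≥ 1, every probability space with a filtration (G_k)_{k=0,…,n}, and every nonnegative martingale (M_k)_{k=0,…,n} with respect to (G_k) satisfying M_0 = 1 and |M_{k+1} − M_k| ≤ (c/√n) M_k almost surely for k = 0, …, n−1, one has E[(max_{0 ≤ k ≤ n} M_k)^{2m}] ≤ C. -/

import Mathlib

open scoped BigOperators ENNReal NNReal
open MeasureTheory

lemma aux_tangent_pow (p : ℕ) (x y : ℝ) (hx : 0 ≤ x) (hy : 0 ≤ y) :
    y ^ (p + 1) + ((p : ℝ) + 1) * y ^ p * (x - y) ≤ x ^ (p + 1) := by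
  have key : x ^ (p + 1) - y ^ (p + 1)
      = ∑ i ∈ Finset.range (p + 1), x ^ i * y ^ (p - i) * (x - y) := by
    rw [← Finset.sum_mul, ← geom_sum₂_mul x y (p + 1)]
    norm_num
  have h2 : ((p : ℝ) + 1) * y ^ p * (x - y)
      = ∑ i ∈ Finset.range (p + 1), y ^ i * y ^ (p - i) * (x - y) := by
    have : ∀ i ∈ Finset.range (p + 1), y ^ i * y ^ (p - i) * (x - y) = y ^ p * (x - y) := by
      intro i hi
      rw [← pow_add]
      have : i + (p - i) = p := by have := Finset.mem_range.1 hi; omega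
      rw [this]
    rw [Finset.sum_congr rfl this, Finset.sum_const, Finset.card_range]
    ring
  have h3 : ∀ i ∈ Finset.range (p + 1),
      y ^ i * y ^ (p - i) * (x - y) ≤ x ^ i * y ^ (p - i) * (x - y) := by
    intro i _
    have hnn : 0 ≤ (x ^ i - y ^ i) * (x - y) := by
      rcases le_total x y with h | h
      · have := pow_le_pow_left₀ hx h i
        nlinarith
      · have := pow_le_pow_left₀ hy h i
        nlinarith
    nlinarith [pow_nonneg hy (p - i)]
  have hsum := Finset.sum_le_sum h3
  rw [← h2] at hsum
  linarith [key, hsum]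

lemma aux_dyadic (S : ℝ) (hS : 1 ≤ S) : ∃ j : ℕ, (2:ℝ) ^ j ≤ S ∧ S < 2 ^ (j + 1) := by
  refine ⟨Nat.log 2 ⌊S⌋₊, ?_, ?_⟩
  · have h1 : (1:ℕ) ≤ ⌊S⌋₊ := Nat.le_floor (by exact_mod_cast hS)
    have h2 : 2 ^ Nat.log 2 ⌊S⌋₊ ≤ ⌊S⌋₊ := Nat.pow_log_le_self 2 (by omega)
    calc (2:ℝ) ^ Nat.log 2 ⌊S⌋₊ ≤ (⌊S⌋₊ : ℝ) := by exact_mod_cast h2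
      _ ≤ S := Nat.floor_le (by linarith)
  · have h3 : ⌊S⌋₊ < 2 ^ (Nat.log 2 ⌊S⌋₊ + 1) := Nat.lt_pow_succ_log_self (by norm_num) _
    have h4 : (⌊S⌋₊ : ℝ) + 1 ≤ 2 ^ (Nat.log 2 ⌊S⌋₊ + 1) := by exact_mod_cast Nat.succ_le_of_lt h3
    have h5 := Nat.lt_floor_add_one S
    linarith

set_option maxHeartbeats 1000000 in
/-- a uniform moment bound for the running maximum of nonnegative
discrete-time martingales with relative step size `c/√n` (cf. (4.23) in Kusuoka). -/
theorem martingale_max_moment_bound (c : ℝ) (hc : 0 < c) (m : ℕ) :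
    ∃ C : ℝ, ∀ n : ℕ, 1 ≤ n →
      ∀ (Ω : Type) (m0 : MeasurableSpace Ω) (μ : Measure Ω),
        IsProbabilityMeasure μ →
        ∀ G : ℕ → MeasurableSpace Ω, (∀ k, G k ≤ m0) → Monotone G →
        ∀ M : ℕ → Ω → ℝ,
          (∀ k ≤ n, StronglyMeasurable[G k] (M k)) →
          (∀ k ≤ n, Integrable (M k) μ) →
          (∀ k < n, μ[M (k + 1) | G k] =ᵐ[μ] M k) →
          (∀ᵐ ω ∂μ, M 0 ω = 1) →
          (∀ k ≤ n, ∀ᵐ ω ∂μ, 0 ≤ M k ω) →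
          (∀ k < n, ∀ᵐ ω ∂μ, |M (k + 1) ω - M k ω| ≤ c / Real.sqrt n * M k ω) →
          ∫⁻ ω, ENNReal.ofReal
              (((Finset.range (n + 1)).sup' Finset.nonempty_range_add_one
                  fun k => M k ω) ^ (2 * m)) ∂μ
            ≤ ENNReal.ofReal C := by
  obtain ⟨p, hpdef⟩ : ∃ p : ℕ, p = 2 * m + 2 := ⟨_, rfl⟩
  have hp2 : 2 ≤ p := by omega
  set Kc : ℝ := c ^ 2 * 2 ^ p * (max 1 c) ^ p with hKcdef
  have hKc0 : 0 < Kc := by positivity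
  refine ⟨2 ^ (2 * m) * Real.exp Kc * 2, ?_⟩
  intro n hn Ω m0 μ hprob G hGle hGmono M hmeas hint hmart hM0 hMnn hstep
  have hn0 : (0:ℝ) < n := by exact_mod_cast hn
  have hsqrt1 : 1 ≤ Real.sqrt n := by
    rw [show (1:ℝ) = Real.sqrt 1 by simp]
    exact Real.sqrt_le_sqrt (by exact_mod_cast hn)
  set δ : ℝ := c / Real.sqrt n with hδdef
  have hδpos : 0 < δ := div_pos hc (by linarith)
  have hδc : δ ≤ c := by
    rw [hδdef, div_le_iff₀ (by linarith)]
    nlinarith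
  have hδsq : δ ^ 2 = c ^ 2 / n := by
    rw [hδdef, div_pow, Real.sq_sqrt (le_of_lt hn0)]
  -- a.e. pointwise bound on M
  have hbound : ∀ k, k ≤ n → ∀ᵐ ω ∂μ, M k ω ≤ (1 + c) ^ k := by
    intro k
    induction k with
    | zero => intro _; filter_upwards [hM0] with ω h; simp [h]
    | succ k ih =>
      intro hk1
      have hkn : k < n := by omega
      filter_upwards [ih (by omega), hstep k hkn, hMnn k (by omega)] with ω h1 h2 h3
      have habs : M (k+1) ω - M k ω ≤ c * M k ω := by
        have h4 := (abs_le.1 h2).2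
        nlinarith [mul_le_mul_of_nonneg_right hδc h3]
      have h5 : M (k+1) ω ≤ (1 + c) * M k ω := by linarith
      calc M (k+1) ω ≤ (1 + c) * M k ω := h5
        _ ≤ (1 + c) * (1 + c) ^ k := by
            apply mul_le_mul_of_nonneg_left h1 (by linarith)
        _ = (1 + c) ^ (k+1) := by ring
  set B : ℝ := (1 + c) ^ n with hBdef
  have hB0 : 0 < B := by positivity
  have hBd : ∀ k, k ≤ n → ∀ᵐ ω ∂μ, |M k ω| ≤ B := by
    intro k hk
    filter_upwards [hbound k hk, hMnn k hk] with ω h1 h2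
    rw [abs_of_nonneg h2]
    calc M k ω ≤ (1 + c) ^ k := h1
      _ ≤ B := pow_le_pow_right₀ (by linarith) hk
  have hMmeas : ∀ k, k ≤ n → Measurable[m0] (M k) :=
    fun k hk => ((hmeas k hk).measurable).le (hGle k)
  have hIntB : ∀ (f : Ω → ℝ) (b : ℝ), Measurable[m0] f → (∀ᵐ ω ∂μ, |f ω| ≤ b) →
      Integrable f μ := by
    intro f b hf hb
    exact Integrable.mono' (integrable_const b) hf.aestronglyMeasurable
      (by filter_upwards [hb] with ω h using by simpa using h)
  -- the filtration and extended process
  set 𝒢 : Filtration ℕ m0 :=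
    ⟨fun k => G (min k n), fun i j hij => hGmono (min_le_min hij le_rfl), fun k => hGle _⟩
    with h𝒢def
  set N : ℕ → Ω → ℝ := fun k ω => M (min k n) ω ^ p with hNdef
  have hNadp : StronglyAdapted 𝒢 N := fun k =>
    (((hmeas _ (min_le_right k n)).measurable.pow_const p)).stronglyMeasurable
  have hNbd : ∀ k, ∀ᵐ ω ∂μ, |N k ω| ≤ B ^ p := by
    intro k
    filter_upwards [hBd _ (min_le_right k n)] with ω h
    rw [hNdef, abs_pow]
    exact pow_le_pow_left₀ (abs_nonneg _) h p
  have hNmeas : ∀ k, Measurable[m0] (N k) :=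
    fun k => (hMmeas _ (min_le_right k n)).pow_const p
  have hNint : ∀ k, Integrable (N k) μ := fun k => hIntB _ _ (hNmeas k) (hNbd k)
  have hNnonneg : (0 : ℕ → Ω → ℝ) ≤ N := by
    intro k ω
    have h : M (min k n) ω ^ p = (M (min k n) ω ^ (m + 1)) ^ 2 := by
      rw [← pow_mul, show (m+1)*2 = p by omega]
    simp only [Pi.zero_apply, hNdef, h]
    exact sq_nonneg _
  -- the increment process
  set H : ℕ → Ω → ℝ := fun k ω => M k ω ^ (p - 1) * (M (k + 1) ω - M k ω) with hHdef
  have hHmeas : ∀ k, k < n → Measurable[m0] (H k) := fun k hk =>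
    ((hMmeas k hk.le).pow_const _).mul ((hMmeas _ hk).sub (hMmeas k hk.le))
  have hHbd : ∀ k, k < n → ∀ᵐ ω ∂μ, |H k ω| ≤ B ^ (p-1) * (B + B) := by
    intro k hk
    filter_upwards [hBd k hk.le, hBd (k+1) hk] with ω h1 h2
    rw [hHdef]
    rw [abs_mul, abs_pow]
    apply mul_le_mul (pow_le_pow_left₀ (abs_nonneg _) h1 _) ?_ (abs_nonneg _) (by positivity)
    calc |M (k+1) ω - M k ω| ≤ |M (k+1) ω| + |M k ω| := abs_sub _ _
      _ ≤ B + B := add_le_add h2 h1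
  have hHint : ∀ k, k < n → Integrable (H k) μ := fun k hk =>
    hIntB _ _ (hHmeas k hk) (hHbd k hk)
  -- conditional expectation of the increments vanishes
  have hD0 : ∀ k, k < n →
      μ[(fun ω => M (k+1) ω - M k ω) | G k] =ᵐ[μ] 0 := by
    intro k hk
    have hsub : μ[M (k+1) - M k | G k] =ᵐ[μ] μ[M (k+1) | G k] - μ[M k | G k] :=
      condExp_sub (hint _ hk) (hint _ hk.le) _
    have hMk : μ[M k | G k] = M k :=
      condExp_of_stronglyMeasurable (hGle k) (hmeas k hk.le) (hint k hk.le)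
    have heq : (fun ω => M (k+1) ω - M k ω) = M (k+1) - M k := rfl
    rw [heq]
    refine hsub.trans ?_
    rw [hMk]
    filter_upwards [hmart k hk] with ω hω
    simp [hω]
  have hpull : ∀ k, k < n → μ[H k | G k] =ᵐ[μ] 0 := by
    intro k hk
    have hf : StronglyMeasurable[G k] (fun ω => M k ω ^ (p-1)) :=
      ((hmeas k hk.le).measurable.pow_const _).stronglyMeasurable
    have hg : Integrable (fun ω => M (k+1) ω - M k ω) μ :=
      (hint _ hk).sub (hint _ hk.le)
    have hfg : Integrable ((fun ω => M k ω ^ (p-1)) * (fun ω => M (k+1) ω - M k ω)) μ :=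
      hHint k hk
    have hmul := condExp_mul_of_stronglyMeasurable_left (μ := μ) hf hfg hg
    refine Filter.EventuallyEq.trans ?_ (hmul.trans ?_)
    · rfl
    · filter_upwards [hD0 k hk] with ω hω
      simp only [Pi.mul_apply, hω, Pi.zero_apply, mul_zero]
  -- N is a submartingale
  have hsubmart : Submartingale N 𝒢 μ := by
    refine submartingale_nat hNadp hNint fun k => ?_
    by_cases hkn : k < n
    · have hmink : min k n = k := min_eq_left hkn.le
      have hmink1 : min (k+1) n = k+1 := min_eq_left (by omega)
      have hGkeq : (𝒢 k : MeasurableSpace Ω) = G k := by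
        simp only [h𝒢def]
        exact congrArg G hmink
      have hNk : N k = fun ω => M k ω ^ p := by simp only [hNdef, hmink]
      have hNk1 : N (k+1) = fun ω => M (k+1) ω ^ p := by simp only [hNdef, hmink1]
      set g : Ω → ℝ := fun ω => N k ω + (p:ℝ) * H k ω with hgdef
      have hg_int : Integrable g μ := (hNint k).add ((hHint k hkn).const_mul _)
      have h1 : g ≤ᵐ[μ] N (k+1) := by
        filter_upwards [hMnn k hkn.le, hMnn (k+1) hkn] with ω hy hx
        have htan := aux_tangent_pow (p-1) (M (k+1) ω) (M k ω) hx hy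
        have hp1 : p - 1 + 1 = p := by omega
        rw [hp1] at htan
        have hcast : ((p - 1 : ℕ):ℝ) + 1 = (p:ℝ) := by
          rw [Nat.cast_sub (by omega : 1 ≤ p)]; ring
        rw [hcast] at htan
        simp only [hgdef, hNk, hNk1, hHdef]
        linarith
      have hcondg : μ[g | G k] =ᵐ[μ] N k := by
        have ha : μ[g | G k] =ᵐ[μ] μ[N k | G k] + μ[(p:ℝ) • H k | G k] := by
          have := condExp_add (μ := μ) (m := G k) (hNint k)
            ((hHint k hkn).const_mul (p:ℝ)) -- N k + (p:ℝ) • H k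
          refine Filter.EventuallyEq.trans ?_ this
          rfl
        have hb : μ[(p:ℝ) • H k | G k] =ᵐ[μ] (p:ℝ) • μ[H k | G k] :=
          condExp_smul (μ := μ) (m := G k) (p:ℝ) (H k)
        have hc : μ[N k | G k] = N k := by
          refine condExp_of_stronglyMeasurable (hGle k) ?_ (hNint k)
          rw [hNk]
          exact ((hmeas k hkn.le).measurable.pow_const p).stronglyMeasurable
        refine ha.trans ?_
        rw [hc]
        filter_upwards [hb, hpull k hkn] with ω h1 h2
        simp only [Pi.add_apply, Pi.smul_apply, smul_eq_mul, h1, h2, Pi.zero_apply,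
          mul_zero, add_zero]
      have hfinal : N k ≤ᵐ[μ] μ[N (k+1) | G k] :=
        hcondg.symm.trans_le (condExp_mono hg_int (hNint (k+1)) h1)
      rw [hGkeq]
      exact hfinal
    · have hmin : min (k+1) n = min k n := by omega
      have heq : N (k+1) = N k := by simp only [hNdef, hmin]
      rw [heq, condExp_of_stronglyMeasurable (𝒢.le k) (hNadp k) (hNint k)]
  -- moment recursion
  have hHzero : ∀ k, k < n → ∫ ω, H k ω ∂μ = 0 := by
    intro k hk
    rw [← integral_condExp (hGle k) (f := H k)]
    rw [integral_congr_ae (hpull k hk)]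
    simp
  have hNmean : ∀ k, k ≤ n → ∫ ω, N k ω ∂μ ≤ (1 + Kc / n) ^ k := by
    intro k
    induction k with
    | zero =>
      intro _
      have h0 : ∫ ω, N 0 ω ∂μ = ∫ _ω, (1:ℝ) ∂μ := by
        refine integral_congr_ae ?_
        filter_upwards [hM0] with ω h
        simp [hNdef, Nat.zero_min, h]
      rw [h0]
      simp
    | succ k ih =>
      intro hk1
      have hkn : k < n := by omega
      have hmink : min k n = k := min_eq_left hkn.le
      have hmink1 : min (k+1) n = k+1 := min_eq_left (by omega)
      -- pointwise a.e. bound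
      have hptw : ∀ᵐ ω ∂μ, N (k+1) ω ≤ (1 + Kc/(n:ℝ)) * N k ω + (p:ℝ) * H k ω := by
        filter_upwards [hMnn k hkn.le, hstep k hkn] with ω hy hd
        set y : ℝ := M k ω with hydef
        set d : ℝ := M (k+1) ω - M k ω with hddef
        have hMk1 : M (k+1) ω = d + y := by rw [hddef, hydef]; ring
        set ff : ℕ → ℝ := fun i => d ^ i * y ^ (p - i) * (p.choose i : ℝ) with hffdef
        have hexp : N (k+1) ω = ∑ j ∈ Finset.range (p+1), ff j := by
          simp only [hNdef, hmink1, hffdef]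
          rw [hMk1, add_pow]
        have hff0 : ff 0 = y ^ p := by simp [hffdef]
        have hff1 : ff 1 = d * y ^ (p-1) * (p:ℝ) := by simp [hffdef]
        have hsplit : ∑ j ∈ Finset.range (p+1), ff j
            = (∑ j ∈ Finset.range (2*m+1), ff (j+2)) + d * y ^ (p-1) * (p:ℝ) + y ^ p := by
          conv_lhs => rw [show p + 1 = (2*m+1) + 1 + 1 by omega, Finset.sum_range_succ',
            Finset.sum_range_succ']
          have hre : (∑ j ∈ Finset.range (2*m+1), ff (j+1+1))
              = ∑ j ∈ Finset.range (2*m+1), ff (j+2) :=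
            Finset.sum_congr rfl fun j _ => by norm_num
          rw [hre]
          norm_num [hff0, hff1]
        have hrest : ∀ j ∈ Finset.range (2*m+1),
            ff (j+2) ≤ (δ^2 * (max 1 c)^p) * (p.choose (j+2) : ℝ) * y ^ p := by
          intro j hj
          rw [hffdef]
          have hjm := Finset.mem_range.1 hj
          have habs : |d| ≤ δ * y := hd
          have hd2 : |d ^ (j+2)| ≤ (δ * y) ^ (j+2) := by
            rw [abs_pow]
            exact pow_le_pow_left₀ (abs_nonneg _) habs _
          have hynn : (0:ℝ) ≤ y := hy
          have hexp2 : (δ * y) ^ (j+2) * y ^ (p - (j+2)) = δ^(j+2) * y ^ p := by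
            rw [mul_pow, mul_assoc, ← pow_add]
            congr 2
            omega
          have hδj : δ^(j+2) ≤ δ^2 * (max 1 c)^p := by
            have h1 : δ^(j+2) = δ^2 * δ^j := by rw [← pow_add]; ring_nf
            rw [h1]
            apply mul_le_mul_of_nonneg_left ?_ (by positivity)
            calc δ^j ≤ (max 1 c)^j := by
                  apply pow_le_pow_left₀ hδpos.le (le_trans hδc (le_max_right 1 c))
              _ ≤ (max 1 c)^p := pow_le_pow_right₀ (le_max_left 1 c) (by omega)
          calc d ^ (j+2) * y ^ (p - (j+2)) * (p.choose (j+2) : ℝ)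
              ≤ |d ^ (j+2)| * y ^ (p - (j+2)) * (p.choose (j+2) : ℝ) := by
                apply mul_le_mul_of_nonneg_right ?_ (by positivity)
                apply mul_le_mul_of_nonneg_right (le_abs_self _) (by positivity)
            _ ≤ (δ * y) ^ (j+2) * y ^ (p - (j+2)) * (p.choose (j+2) : ℝ) := by
                apply mul_le_mul_of_nonneg_right ?_ (by positivity)
                apply mul_le_mul_of_nonneg_right hd2 (by positivity)
            _ = (δ^(j+2) * y ^ p) * (p.choose (j+2) : ℝ) := by rw [hexp2]
            _ ≤ (δ^2 * (max 1 c)^p) * (p.choose (j+2) : ℝ) * y ^ p := by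
                nlinarith [hδj, mul_nonneg (Nat.cast_nonneg (p.choose (j+2)))
                  (pow_nonneg hynn p)]
        have hchoose : (∑ j ∈ Finset.range (2*m+1), (p.choose (j+2) : ℝ)) ≤ 2 ^ p := by
          have hnat : ∑ j ∈ Finset.range (2*m+1), p.choose (j+2) ≤ 2 ^ p := by
            have h := Nat.sum_range_choose p
            have : ∑ j ∈ Finset.range (2*m+1), p.choose (j+2)
                ≤ ∑ i ∈ Finset.range (p+1), p.choose i := by
              conv_rhs => rw [show p + 1 = (2*m+1) + 1 + 1 by omega, Finset.sum_range_succ',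
                Finset.sum_range_succ']
              have hre : (∑ j ∈ Finset.range (2*m+1), p.choose (j+1+1))
                  = ∑ j ∈ Finset.range (2*m+1), p.choose (j+2) :=
                Finset.sum_congr rfl fun j _ => by norm_num
              rw [hre]
              omega
            omega
          calc (∑ j ∈ Finset.range (2*m+1), (p.choose (j+2) : ℝ))
              = ((∑ j ∈ Finset.range (2*m+1), p.choose (j+2) : ℕ) : ℝ) := by push_cast; rfl
            _ ≤ ((2^p : ℕ) : ℝ) := by exact_mod_cast hnat
            _ = 2 ^ p := by push_cast; rfl
        have hsum_rest : (∑ j ∈ Finset.range (2*m+1), ff (j+2)) ≤ (Kc / n) * y ^ p := by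
          calc (∑ j ∈ Finset.range (2*m+1), ff (j+2))
              ≤ ∑ j ∈ Finset.range (2*m+1),
                  (δ^2 * (max 1 c)^p) * (p.choose (j+2) : ℝ) * y ^ p :=
                Finset.sum_le_sum hrest
            _ = (δ^2 * (max 1 c)^p) * (∑ j ∈ Finset.range (2*m+1), (p.choose (j+2) : ℝ)) * y^p := by
                rw [← Finset.sum_mul, ← Finset.mul_sum]
            _ ≤ (δ^2 * (max 1 c)^p) * 2^p * y^p := by
                apply mul_le_mul_of_nonneg_right ?_ (pow_nonneg hy p)
                apply mul_le_mul_of_nonneg_left hchoose (by positivity)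
            _ = (Kc / n) * y ^ p := by
                rw [hδsq, hKcdef]; ring
        have hNkval : N k ω = y ^ p := by simp only [hNdef, hmink, hydef]
        have hHval : H k ω = y ^ (p-1) * d := by simp only [hHdef, hydef, hddef]
        rw [hexp, hsplit, hNkval, hHval]
        have : d * y ^ (p-1) * (p:ℝ) = (p:ℝ) * (y ^ (p-1) * d) := by ring
        nlinarith [hsum_rest]
      -- integrate
      have hint_rhs : Integrable (fun ω => (1 + Kc/(n:ℝ)) * N k ω + (p:ℝ) * H k ω) μ :=
        ((hNint k).const_mul _).add ((hHint k hkn).const_mul _)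
      have hmono := integral_mono_ae (hNint (k+1)) hint_rhs hptw
      rw [integral_add ((hNint k).const_mul _) ((hHint k hkn).const_mul _),
        integral_const_mul, integral_const_mul, hHzero k hkn, mul_zero, add_zero] at hmono
      calc ∫ ω, N (k+1) ω ∂μ ≤ (1 + Kc/(n:ℝ)) * ∫ ω, N k ω ∂μ := hmono
        _ ≤ (1 + Kc/(n:ℝ)) * (1 + Kc/(n:ℝ)) ^ k := by
            apply mul_le_mul_of_nonneg_left (ih (by omega)) (by positivity)
        _ = (1 + Kc/(n:ℝ)) ^ (k+1) := by ring
  have hNn_mean : ∫ ω, N n ω ∂μ ≤ Real.exp Kc := by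
    refine (hNmean n le_rfl).trans ?_
    have h1 : (1 + Kc/(n:ℝ)) ≤ Real.exp (Kc/n) := by
      have := Real.add_one_le_exp (Kc/n)
      linarith
    calc (1 + Kc/(n:ℝ)) ^ n ≤ (Real.exp (Kc/n)) ^ n := pow_le_pow_left₀ (by positivity) h1 n
      _ = Real.exp (n * (Kc/n)) := (Real.exp_nat_mul _ n).symm
      _ = Real.exp Kc := by congr 1; field_simp
  -- tail bound
  set S : Ω → ℝ := fun ω => (Finset.range (n + 1)).sup' Finset.nonempty_range_add_one
      fun k => M k ω with hSdef
  have hSmeas : Measurable[m0] S :=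
    Finset.measurable_range_sup'' (fun k hk => hMmeas k hk)
  have htail : ∀ j : ℕ,
      μ {ω | (2:ℝ) ^ j ≤ S ω} ≤ ENNReal.ofReal (Real.exp Kc) / (2:ℝ≥0∞) ^ (j * p) := by
    intro j
    set ε : ℝ≥0 := 2 ^ (j*p) with hεdef
    have hmax := maximal_ineq (μ := μ) hsubmart hNnonneg (ε := ε) n
    have hae : ∀ᵐ ω ∂μ, ∀ k, k ≤ n → 0 ≤ M k ω := by
      rw [ae_all_iff]
      intro k
      by_cases hk : k ≤ n
      · filter_upwards [hMnn k hk] with ω h _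
        exact h
      · filter_upwards with ω h
        exact absurd h hk
    have hsubset : {ω | (2:ℝ)^j ≤ S ω} ≤ᵐ[μ]
        {ω | (ε:ℝ) ≤ (Finset.range (n+1)).sup' Finset.nonempty_range_add_one fun k => N k ω} := by
      filter_upwards [hae] with ω hω hmem
      obtain ⟨k, hk, hEq⟩ := Finset.exists_mem_eq_sup'
        (Finset.nonempty_range_add_one (n := n)) (fun k => M k ω)
      have hk' : k ≤ n := by
        have := Finset.mem_range.1 hk
        omega
      have h2j : (2:ℝ)^j ≤ M k ω := by
        have hmem' : (2:ℝ)^j ≤ S ω := hmem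
        rw [hSdef] at hmem'
        simpa [← hEq] using hmem'
      have hεval : (ε:ℝ) = ((2:ℝ)^j)^p := by
        rw [hεdef, NNReal.coe_pow, ← pow_mul]
        norm_num
      have hNge : (ε:ℝ) ≤ N k ω := by
        rw [hεval]
        have : N k ω = M k ω ^ p := by simp only [hNdef, min_eq_left hk']
        rw [this]
        exact pow_le_pow_left₀ (by positivity) h2j p
      exact le_trans hNge (Finset.le_sup' (fun k => N k ω) hk)
    have h1 := measure_mono_ae hsubset
    have h2 : (ε:ℝ≥0∞) * μ {ω | (ε:ℝ) ≤ (Finset.range (n+1)).sup'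
        Finset.nonempty_range_add_one fun k => N k ω} ≤ ENNReal.ofReal (Real.exp Kc) := by
      rw [← smul_eq_mul, ← ENNReal.smul_def]
      refine le_trans hmax ?_
      refine ENNReal.ofReal_le_ofReal ?_
      refine le_trans (setIntegral_le_integral (hNint n)
        (Filter.Eventually.of_forall fun ω => hNnonneg n ω)) hNn_mean
    have hε0 : (ε:ℝ≥0∞) ≠ 0 :=
      ENNReal.coe_ne_zero.2 (pow_ne_zero _ two_ne_zero)
    have hεcoe : (ε:ℝ≥0∞) = (2:ℝ≥0∞) ^ (j*p) := by
      rw [hεdef, ENNReal.coe_pow]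
      norm_num
    calc μ {ω | (2:ℝ)^j ≤ S ω}
        ≤ μ {ω | (ε:ℝ) ≤ (Finset.range (n+1)).sup' Finset.nonempty_range_add_one
            fun k => N k ω} := h1
      _ ≤ ENNReal.ofReal (Real.exp Kc) / (ε:ℝ≥0∞) := by
          rw [ENNReal.le_div_iff_mul_le (Or.inl hε0) (Or.inl ENNReal.coe_ne_top)]
          rw [mul_comm]
          exact h2
      _ = ENNReal.ofReal (Real.exp Kc) / (2:ℝ≥0∞) ^ (j*p) := by rw [hεcoe]
  -- final assembly
  have hAjmeas : ∀ j : ℕ, MeasurableSet {ω | (2:ℝ)^j ≤ S ω} :=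
    fun j => measurableSet_le measurable_const hSmeas
  set F : ℕ → Ω → ℝ≥0∞ := fun j => Set.indicator {ω | (2:ℝ)^j ≤ S ω}
    (fun _ => (2:ℝ≥0∞)^(2*m*(j+1))) with hFdef
  have hS1 : ∀ᵐ ω ∂μ, 1 ≤ S ω := by
    filter_upwards [hM0] with ω h
    have hmem : (0:ℕ) ∈ Finset.range (n+1) := by simp
    have := Finset.le_sup' (fun k => M k ω) hmem
    rw [hSdef]
    simp only [h] at this
    exact this
  have hptw : ∀ᵐ ω ∂μ, ENNReal.ofReal (S ω ^ (2*m)) ≤ ∑' j, F j ω := by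
    filter_upwards [hS1] with ω hω
    obtain ⟨j, hj1, hj2⟩ := aux_dyadic (S ω) hω
    have hle : ENNReal.ofReal (S ω ^ (2*m)) ≤ F j ω := by
      have hωmem : ω ∈ {ω | (2:ℝ)^j ≤ S ω} := hj1
      rw [hFdef]
      simp only []
      rw [Set.indicator_of_mem hωmem]
      calc ENNReal.ofReal (S ω ^ (2*m))
          ≤ ENNReal.ofReal (((2:ℝ)^(j+1))^(2*m)) := by
            apply ENNReal.ofReal_le_ofReal
            exact pow_le_pow_left₀ (by linarith) hj2.le _
        _ = (2:ℝ≥0∞)^(2*m*(j+1)) := by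
            rw [← pow_mul, ENNReal.ofReal_pow (by norm_num)]
            norm_num
            ring_nf
    exact hle.trans (ENNReal.le_tsum j)
  have hgoal : ∫⁻ ω, ENNReal.ofReal (S ω ^ (2*m)) ∂μ
      ≤ ENNReal.ofReal (2 ^ (2*m) * Real.exp Kc * 2) := by
    set X : ℝ≥0∞ := ENNReal.ofReal (Real.exp Kc) with hXdef
    calc ∫⁻ ω, ENNReal.ofReal (S ω ^ (2*m)) ∂μ
        ≤ ∫⁻ ω, ∑' j, F j ω ∂μ := lintegral_mono_ae hptw
      _ = ∑' j, ∫⁻ ω, F j ω ∂μ :=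
          lintegral_tsum fun j => (measurable_const.indicator (hAjmeas j)).aemeasurable
      _ = ∑' j, (2:ℝ≥0∞)^(2*m*(j+1)) * μ {ω | (2:ℝ)^j ≤ S ω} := by
          congr 1
          funext j
          rw [hFdef]
          simp only []
          rw [lintegral_indicator (hAjmeas j), setLIntegral_const]
      _ ≤ ∑' j, ((2:ℝ≥0∞)^(2*m) * X) * (2⁻¹:ℝ≥0∞)^j := by
          apply ENNReal.tsum_le_tsum
          intro j
          have key : (2:ℝ≥0∞)^(2*m*(j+1)) ≤ 2^(2*m) * (2⁻¹)^j * 2^(j*p) := by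
            have hrhs : (2:ℝ≥0∞)^(2*m) * (2⁻¹)^j * 2^(j*p) = 2^(2*m + j*p) / 2^j := by
              rw [← ENNReal.inv_pow, pow_add, div_eq_mul_inv]
              ring
            rw [hrhs, ENNReal.le_div_iff_mul_le
              (Or.inl (pow_ne_zero j (by norm_num : (2:ℝ≥0∞) ≠ 0)))
              (Or.inl (ENNReal.pow_ne_top ENNReal.ofNat_ne_top)), ← pow_add]
            apply pow_le_pow_right' (by norm_num : (1:ℝ≥0∞) ≤ 2)
            have hjp : j*p = 2*m*j + 2*j := by rw [hpdef]; ring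
            have h2m : 2*m*(j+1) = 2*m*j + 2*m := by ring
            rw [hjp, h2m]
            have := Nat.zero_le (2*m*j)
            linarith
          calc (2:ℝ≥0∞)^(2*m*(j+1)) * μ {ω | (2:ℝ)^j ≤ S ω}
              ≤ (2^(2*m) * (2⁻¹)^j * 2^(j*p)) * (X / 2^(j*p)) :=
                mul_le_mul' key (htail j)
            _ = (2^(2*m) * (2⁻¹)^j) * (2^(j*p) * (X / 2^(j*p))) := by ring
            _ ≤ (2^(2*m) * (2⁻¹)^j) * X := mul_le_mul_right ENNReal.mul_div_le _
            _ = ((2:ℝ≥0∞)^(2*m) * X) * (2⁻¹)^j := by ring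
      _ = ((2:ℝ≥0∞)^(2*m) * X) * ∑' j, (2⁻¹:ℝ≥0∞)^j := ENNReal.tsum_mul_left
      _ = ((2:ℝ≥0∞)^(2*m) * X) * 2 := by
          rw [ENNReal.tsum_geometric, ENNReal.one_sub_inv_two, inv_inv]
      _ = ENNReal.ofReal (2 ^ (2*m) * Real.exp Kc * 2) := by
          rw [ENNReal.ofReal_mul (by positivity), ENNReal.ofReal_mul (by positivity)]
          rw [ENNReal.ofReal_pow (by norm_num)]
          norm_num
          rfl
  exact hgoal
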